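/- Suppose b = 1, ε > 0, a² = ε² − 2, τ = ε + a, and 6ε − 2ε³ − 2a(ε² − 2) = 0. Then the fourth complex derivative of the entire function λ ↦ Δ(λ, τ) at λ = 0 equals (ε + a)³(3a − ε) and is nonzero, while Δ(0, τ) and its first three derivatives at 0 all vanish; hence λ = 0 is a zero of order exactly four of λ ↦ Δ(λ, τ). -/

import Mathlib

open Complex

/-- The characteristic function Δ(λ, τ) = λ² − ελ + 1 − (aλ + b)·exp(−λτ) of the
linearized van der Pol equation with delayed feedback. -/
noncomputable def charFn (ε a b τ : ℝ) (lam : ℂ) : ℂ :=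
  lam ^ 2 - (ε : ℂ) * lam + 1 - ((a : ℂ) * lam + (b : ℂ)) * Complex.exp (-lam * (τ : ℂ))

/-- `z` is a zero of order exactly `n` of `f`: the derivatives of order `< n` all vanish
at `z`, and the `n`-th derivative does not. -/
def IsZeroOfOrderExactly (f : ℂ → ℂ) (z : ℂ) (n : ℕ) : Prop :=
  (∀ k < n, iteratedDeriv k f z = 0) ∧ iteratedDeriv n f z ≠ 0

lemma hasDerivAt_aux (c d t l : ℂ) :
    HasDerivAt (fun z : ℂ => (c * z + d) * Complex.exp (-z * t))
      ((c - t * (c * l + d)) * Complex.exp (-l * t)) l := by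
  have h1 : HasDerivAt (fun z : ℂ => c * z + d) c l := by
    simpa using ((hasDerivAt_id l).const_mul c).add_const d
  have h2 : HasDerivAt (fun z : ℂ => Complex.exp (-z * t)) (-t * Complex.exp (-l * t)) l := by
    have h3 : HasDerivAt (fun z : ℂ => -z * t) (-t) l := by
      simpa using ((hasDerivAt_id l).neg.mul_const t)
    simpa [mul_comm, Function.comp_def] using (Complex.hasDerivAt_exp (-l * t)).comp l h3
  have h := h1.mul h2
  convert h using 1
  · rfl
  · rfl
  · rfl
  ring

lemma deriv_step (p q r c d t : ℂ) :
    deriv (fun z : ℂ => p * z ^ 2 + q * z + r + (c * z + d) * Complex.exp (-z * t))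
      = fun z : ℂ => 2 * p * z + q + ((-t * c) * z + (c - t * d)) * Complex.exp (-z * t) := by
  funext l
  have hpoly : HasDerivAt (fun z : ℂ => p * z ^ 2 + q * z + r) (2 * p * l + q) l := by
    have h := (((hasDerivAt_pow 2 l).const_mul p).add ((hasDerivAt_id l).const_mul q)).add_const r
    convert h using 1
    · rfl
    · rfl
    · rfl
    ring
  have h := hpoly.add (hasDerivAt_aux c d t l)
  erw [h.deriv]
  ring

lemma iter_step (n : ℕ) (f g : ℂ → ℂ) (h : deriv f = g) :
    iteratedDeriv (n + 1) f 0 = iteratedDeriv n g 0 := by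
  rw [iteratedDeriv_succ', h]

/-- For b = 1, ε > 0, a² = ε² − 2, τ = ε + a and 6ε − 2ε³ − 2a(ε² − 2) = 0, the fourth
derivative of Δ(·, τ) at λ = 0 equals (ε + a)³(3a − ε) and is nonzero, the value and
first three derivatives vanish at 0, and λ = 0 is a zero of order exactly four. -/
theorem quadruple_zero_root (ε a b τ : ℝ) (hb : b = 1) (hε : 0 < ε)
    (ha : a ^ 2 = ε ^ 2 - 2) (hτ : τ = ε + a)
    (h3 : 6 * ε - 2 * ε ^ 3 - 2 * a * (ε ^ 2 - 2) = 0) :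
    iteratedDeriv 4 (charFn ε a b τ) 0 = ((ε : ℂ) + a) ^ 3 * (3 * (a : ℂ) - (ε : ℂ)) ∧
    iteratedDeriv 4 (charFn ε a b τ) 0 ≠ 0 ∧
    (∀ k < 4, iteratedDeriv k (charFn ε a b τ) 0 = 0) ∧
    IsZeroOfOrderExactly (charFn ε a b τ) 0 4 := by
  -- real algebra: from the hypotheses, ε² = 8/3 and a = ε/2
  have ha3 : a ^ 3 = 3 * ε - ε ^ 3 := by linear_combination a * ha - h3 / 2
  have hsq : (a ^ 3) ^ 2 = (3 * ε - ε ^ 3) ^ 2 := by rw [ha3]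
  have hcu : (a ^ 2) ^ 3 = (ε ^ 2 - 2) ^ 3 := by rw [ha]
  have hε2 : ε ^ 2 = 8 / 3 := by linear_combination (hsq - hcu) / 3
  have hapos : 0 < a := by nlinarith [ha3, hε2, sq_nonneg a]
  have ha' : a = ε / 2 := by nlinarith [ha, hε2, hapos, hε]
  have hε2C : (ε : ℂ) ^ 2 = 8 / 3 := by
    have h := congrArg Complex.ofReal hε2
    push_cast at h
    exact h
  subst hb
  subst ha'
  subst hτ
  set E : ℂ := (ε : ℂ) with hE
  set A : ℂ := ((ε / 2 : ℝ) : ℂ) with hA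
  set T : ℂ := ((ε + ε / 2 : ℝ) : ℂ) with hT
  have hAe : A = E / 2 := by rw [hA, hE]; push_cast; ring
  have hTe : T = E + E / 2 := by rw [hT, hE]; push_cast; ring
  -- the canonical form of charFn and its derivatives
  have D0 : deriv (charFn ε (ε / 2) 1 (ε + ε / 2)) =
      fun z : ℂ => (0 : ℂ) * z ^ 2 + 2 * z + (-E) +
        ((T * A) * z + (-A + T * 1)) * Complex.exp (-z * T) := by
    have e0 : charFn ε (ε / 2) 1 (ε + ε / 2) =
        fun z : ℂ => (1 : ℂ) * z ^ 2 + (-E) * z + 1 +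
          ((-A) * z + (-(1 : ℂ))) * Complex.exp (-z * T) := by
      funext z; simp only [charFn, hE, hA, hT]; push_cast; ring
    rw [e0, deriv_step]; funext z; ring
  have D1 : deriv (fun z : ℂ => (0 : ℂ) * z ^ 2 + 2 * z + (-E) +
      ((T * A) * z + (-A + T * 1)) * Complex.exp (-z * T)) =
      fun z : ℂ => (0 : ℂ) * z ^ 2 + 0 * z + 2 +
        ((-(T ^ 2 * A)) * z + (2 * T * A - T ^ 2 * 1)) * Complex.exp (-z * T) := by
    rw [deriv_step]; funext z; ring
  have D2 : deriv (fun z : ℂ => (0 : ℂ) * z ^ 2 + 0 * z + 2 +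
      ((-(T ^ 2 * A)) * z + (2 * T * A - T ^ 2 * 1)) * Complex.exp (-z * T)) =
      fun z : ℂ => (0 : ℂ) * z ^ 2 + 0 * z + 0 +
        ((T ^ 3 * A) * z + (-(3 * T ^ 2 * A) + T ^ 3 * 1)) * Complex.exp (-z * T) := by
    rw [deriv_step]; funext z; ring
  have D3 : deriv (fun z : ℂ => (0 : ℂ) * z ^ 2 + 0 * z + 0 +
      ((T ^ 3 * A) * z + (-(3 * T ^ 2 * A) + T ^ 3 * 1)) * Complex.exp (-z * T)) =
      fun z : ℂ => (0 : ℂ) * z ^ 2 + 0 * z + 0 +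
        ((-(T ^ 4 * A)) * z + (4 * T ^ 3 * A - T ^ 4 * 1)) * Complex.exp (-z * T) := by
    rw [deriv_step]; funext z; ring
  -- values at 0
  have V0 : iteratedDeriv 0 (charFn ε (ε / 2) 1 (ε + ε / 2)) 0 = 0 := by
    rw [iteratedDeriv_zero]
    simp [charFn]
  have V1 : iteratedDeriv 1 (charFn ε (ε / 2) 1 (ε + ε / 2)) 0 = 0 := by
    have h := iter_step 0 _ _ D0
    rw [iteratedDeriv_zero] at h
    refine h.trans ?_
    simp only [hTe, hAe]
    simp [Complex.exp_zero]
  have V2 : iteratedDeriv 2 (charFn ε (ε / 2) 1 (ε + ε / 2)) 0 = 0 := by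
    have h := (iter_step 1 _ _ D0).trans (iter_step 0 _ _ D1)
    rw [iteratedDeriv_zero] at h
    refine h.trans ?_
    simp only [hTe, hAe]
    simp [Complex.exp_zero]
    linear_combination (-(3 : ℂ) / 4) * hε2C
  have V3 : iteratedDeriv 3 (charFn ε (ε / 2) 1 (ε + ε / 2)) 0 = 0 := by
    have h := ((iter_step 2 _ _ D0).trans (iter_step 1 _ _ D1)).trans (iter_step 0 _ _ D2)
    rw [iteratedDeriv_zero] at h
    refine h.trans ?_
    simp only [hTe, hAe]
    simp [Complex.exp_zero]
    ring
  have V4 : iteratedDeriv 4 (charFn ε (ε / 2) 1 (ε + ε / 2)) 0 =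
      ((ε : ℂ) + ((ε / 2 : ℝ) : ℂ)) ^ 3 * (3 * ((ε / 2 : ℝ) : ℂ) - (ε : ℂ)) := by
    have h := (((iter_step 3 _ _ D0).trans (iter_step 2 _ _ D1)).trans
      (iter_step 1 _ _ D2)).trans (iter_step 0 _ _ D3)
    rw [iteratedDeriv_zero] at h
    refine h.trans ?_
    simp only [hTe, hAe, hE]
    simp [Complex.exp_zero]
    ring
  have Vne : iteratedDeriv 4 (charFn ε (ε / 2) 1 (ε + ε / 2)) 0 ≠ 0 := by
    rw [V4]
    have hr : ((ε + ε / 2) ^ 3 * (3 * (ε / 2) - ε) : ℝ) ≠ 0 := by nlinarith [pow_pos hε 4]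
    intro h
    apply hr
    exact_mod_cast h
  have hlow : ∀ k < 4, iteratedDeriv k (charFn ε (ε / 2) 1 (ε + ε / 2)) 0 = 0 := by
    intro k hk
    interval_cases k
    · exact V0
    · exact V1
    · exact V2
    · exact V3
  exact ⟨V4, Vne, hlow, hlow, Vne⟩
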